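/- Let R be a ring, D a derivation of R, and let a ∈ R. Suppose f = Σ_{i=0}^{n} xⁱbᵢ ∈ R[x;D] satisfies the two quasi-regularity equations f + x·a − f·(x·a) = 0 and f + x·a − (x·a)·f = 0 in R[x;D]. Then b₀ = 0, bₙ·a = 0, bᵢ − b_{i−1}·a + D(bᵢ)·a = 0 for i = 2,…,n, and b₁ + a + D(b₁)·a = 0. -/

import Mathlib

/-- Let `R` be a ring and `D` a derivation of `R`.  In the differential
polynomial ring `A = R[x;D]` (axiomatized by the ring embedding `ι : R →+* A`, the element
`X`, the commutation rule `X * ι a = ι a * X + ι (D a)`, and the fact that every element of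
`A` is uniquely of the form `Σ_i X^i * ι aᵢ`), suppose `f = Σ_{i=0}^{n} xⁱ bᵢ` (so `bᵢ = 0`
for `i > n`) satisfies the quasi-regularity equations `f + x·a − f·(x·a) = 0` and
`f + x·a − (x·a)·f = 0`.  Then `b₀ = 0`, `bₙ·a = 0`,
`bᵢ − b_{i−1}·a + D(bᵢ)·a = 0` for `i = 2,…,n`, and `b₁ + a + D(b₁)·a = 0`. -/
theorem coefficient_equations_of_quasiRegular
    {R A : Type*} [Ring R] [Ring A]
    (D : R → R)
    (hD_add : ∀ a b : R, D (a + b) = D a + D b)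
    (hD_mul : ∀ a b : R, D (a * b) = D a * b + a * D b)
    (ι : R →+* A) (X : A)
    (hcomm : ∀ a : R, X * ι a = ι a * X + ι (D a))
    (hspan : ∀ f : A, ∃ c : ℕ →₀ R, f = c.sum fun i a => X ^ i * ι a)
    (hfree : ∀ c : ℕ →₀ R, (c.sum fun i a => X ^ i * ι a) = 0 → c = 0)
    (a : R) (n : ℕ) (b : ℕ → R)
    (hb_top : ∀ i : ℕ, n < i → b i = 0)
    (f : A)
    (hf : f = ∑ i ∈ Finset.range (n + 1), X ^ i * ι (b i))
    (hqr₁ : f + X * ι a - f * (X * ι a) = 0)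
    (hqr₂ : f + X * ι a - (X * ι a) * f = 0) :
    b 0 = 0 ∧
    b n * a = 0 ∧
    (∀ i : ℕ, 2 ≤ i → i ≤ n → b i - b (i - 1) * a + D (b i) * a = 0) ∧
    b 1 + a + D (b 1) * a = 0 := by
  classical
  have D0 : D 0 = 0 := by
    have h := hD_add 0 0
    rw [add_zero] at h
    exact (left_eq_add.mp h)
  -- linear independence, function version
  have L : ∀ (N : ℕ) (g : ℕ → R), (∀ i, N ≤ i → g i = 0) →
      (∑ i ∈ Finset.range N, X ^ i * ι (g i)) = 0 → ∀ i, g i = 0 := by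
    intro N g hg hsum i
    have hsupp : ∀ j, g j ≠ 0 → j ∈ Finset.range N := by
      intro j hj
      rw [Finset.mem_range]
      by_contra h
      exact hj (hg j (not_lt.mp h))
    set c : ℕ →₀ R := Finsupp.onFinset (Finset.range N) g hsupp with hc
    have hceq : (c.sum fun i r => X ^ i * ι r) = ∑ i ∈ Finset.range N, X ^ i * ι (g i) := by
      rw [Finsupp.sum]
      refine Finset.sum_subset Finsupp.support_onFinset_subset ?_
      intro x _ hxs
      rw [Finsupp.notMem_support_iff.mp hxs, map_zero, mul_zero]
    have hz : c = 0 := hfree c (by rw [hceq]; exact hsum)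
    have : g i = c i := rfl
    rw [this, hz]
    rfl
  -- padding lemma
  have pad : ∀ (N M : ℕ) (g : ℕ → R), N ≤ M → (∀ k, N ≤ k → g k = 0) →
      ∑ k ∈ Finset.range N, X ^ k * ι (g k) = ∑ k ∈ Finset.range M, X ^ k * ι (g k) := by
    intro N M g hNM hg
    refine Finset.sum_subset (Finset.range_subset_range.mpr hNM) ?_
    intro k _ hk
    rw [hg k (not_lt.mp (fun h => hk (Finset.mem_range.mpr h))), map_zero, mul_zero]
  -- the delta sum
  have hδ : ∀ M, 2 ≤ M →
      ∑ k ∈ Finset.range M, X ^ k * ι (if k = 1 then a else 0) = X * ι a := by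
    intro M hM
    rw [Finset.sum_eq_single 1]
    · simp
    · intro k _ hk; simp [hk]
    · intro h; exact absurd (Finset.mem_range.mpr (by omega)) h
  -- shift lemma
  have shift : ∀ (N : ℕ) (g : ℕ → R),
      ∑ k ∈ Finset.range (N + 1), X ^ k * ι (if k = 0 then 0 else g (k - 1))
        = ∑ i ∈ Finset.range N, X ^ (i + 1) * ι (g i) := by
    intro N g
    rw [Finset.sum_range_succ']
    simp
  ------------------------------------------------------------------
  -- Part A : equations from hqr₁
  ------------------------------------------------------------------
  have hterm : ∀ i, X ^ i * ι (b i) * (X * ι a)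
      = X ^ (i + 1) * ι (b i * a) - X ^ i * ι (D (b i) * a) := by
    intro i
    have h1 : ι (b i) * X = X * ι (b i) - ι (D (b i)) := by
      rw [eq_sub_iff_add_eq, ← hcomm (b i)]
    rw [map_mul, map_mul, pow_succ]
    calc X ^ i * ι (b i) * (X * ι a) = X ^ i * ((ι (b i) * X) * ι a) := by
          noncomm_ring
      _ = X ^ i * ((X * ι (b i) - ι (D (b i))) * ι a) := by rw [h1]
      _ = X ^ i * X * (ι (b i) * ι a) - X ^ i * (ι (D (b i)) * ι a) := by
          noncomm_ring
  set e : ℕ → R := fun k =>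
    b k + (if k = 1 then a else 0) - (if k = 0 then 0 else b (k - 1) * a) + D (b k) * a
    with he
  have hetop : ∀ k, n + 2 ≤ k → e k = 0 := by
    intro k hk
    have h1 : b k = 0 := hb_top k (by omega)
    have h2 : b (k - 1) = 0 := hb_top (k - 1) (by omega)
    simp [he, h1, h2, D0, show k ≠ 1 by omega, show k ≠ 0 by omega]
  have hfX : f * (X * ι a)
      = (∑ i ∈ Finset.range (n + 1), X ^ (i + 1) * ι (b i * a))
        - ∑ i ∈ Finset.range (n + 1), X ^ i * ι (D (b i) * a) := by
    rw [hf, Finset.sum_mul, ← Finset.sum_sub_distrib]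
    exact Finset.sum_congr rfl fun i _ => hterm i
  have key1 : ∑ k ∈ Finset.range (n + 2), X ^ k * ι (e k) = 0 := by
    have expand : ∑ k ∈ Finset.range (n + 2), X ^ k * ι (e k)
        = (∑ k ∈ Finset.range (n + 2), X ^ k * ι (b k))
          + (∑ k ∈ Finset.range (n + 2), X ^ k * ι (if k = 1 then a else 0))
          - (∑ k ∈ Finset.range (n + 2), X ^ k * ι (if k = 0 then 0 else b (k - 1) * a))
          + ∑ k ∈ Finset.range (n + 2), X ^ k * ι (D (b k) * a) := by
      simp only [he, map_add, map_sub, mul_add, mul_sub,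
        Finset.sum_add_distrib, Finset.sum_sub_distrib]
    have p1 : ∑ k ∈ Finset.range (n + 2), X ^ k * ι (b k) = f := by
      rw [Finset.sum_range_succ, hb_top (n + 1) (by omega), map_zero, mul_zero, add_zero, ← hf]
    have p2 := hδ (n + 2) (by omega)
    have p3 := shift (n + 1) (fun i => b i * a)
    have p4 : ∑ k ∈ Finset.range (n + 2), X ^ k * ι (D (b k) * a)
        = ∑ k ∈ Finset.range (n + 1), X ^ k * ι (D (b k) * a) := by
      rw [Finset.sum_range_succ, hb_top (n + 1) (by omega), D0, zero_mul, map_zero,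
        mul_zero, add_zero]
    rw [expand, p1, p2, p3, p4]
    calc f + X * ι a
          - ∑ i ∈ Finset.range (n + 1), X ^ (i + 1) * ι (b i * a)
          + ∑ k ∈ Finset.range (n + 1), X ^ k * ι (D (b k) * a)
        = f + X * ι a - f * (X * ι a) := by rw [hfX]; abel
      _ = 0 := hqr₁
  have he0 : ∀ k, e k = 0 := L (n + 2) e hetop key1
  ------------------------------------------------------------------
  -- Part B : b 0 = 0 from hqr₂
  ------------------------------------------------------------------
  obtain ⟨c, hcf⟩ := hspan (ι a * f)
  set N : ℕ := c.support.sup id + 1 with hN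
  have hcN : ∀ j, N ≤ j → c j = 0 := by
    intro j hj
    by_contra h
    have hjs : j ∈ c.support := Finsupp.mem_support_iff.mpr h
    have : j ≤ c.support.sup id := Finset.le_sup (f := id) hjs
    omega
  have hXg : (X * ι a) * f
      = ∑ k ∈ Finset.range (N + 1), X ^ k * ι (if k = 0 then 0 else c (k - 1)) := by
    rw [shift N (fun i => c i)]
    have hsum : (c.sum fun i r => X ^ i * ι r) = ∑ j ∈ Finset.range N, X ^ j * ι (c j) := by
      rw [Finsupp.sum]
      refine Finset.sum_subset ?_ ?_
      · intro j hj
        rw [Finset.mem_range]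
        by_contra h
        exact Finsupp.mem_support_iff.mp hj (hcN j (not_lt.mp h))
      · intro x _ hxs
        rw [Finsupp.notMem_support_iff.mp hxs, map_zero, mul_zero]
    rw [mul_assoc, ← hcf] at *
    rw [show ι a * f = ∑ j ∈ Finset.range N, X ^ j * ι (c j) from by rw [hcf, hsum]]
    rw [Finset.mul_sum]
    refine Finset.sum_congr rfl fun j _ => ?_
    rw [pow_succ, ← mul_assoc]
    congr 1
    rw [← pow_succ, ← pow_succ']
  set M : ℕ := max (n + 2) (N + 1) with hM
  set e2 : ℕ → R := fun k =>
    b k + (if k = 1 then a else 0) - (if k = 0 then 0 else c (k - 1)) with he2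
  have key2 : ∑ k ∈ Finset.range M, X ^ k * ι (e2 k) = 0 := by
    have expand : ∑ k ∈ Finset.range M, X ^ k * ι (e2 k)
        = (∑ k ∈ Finset.range M, X ^ k * ι (b k))
          + (∑ k ∈ Finset.range M, X ^ k * ι (if k = 1 then a else 0))
          - ∑ k ∈ Finset.range M, X ^ k * ι (if k = 0 then 0 else c (k - 1)) := by
      simp only [he2, map_add, map_sub, mul_add, mul_sub,
        Finset.sum_add_distrib, Finset.sum_sub_distrib]
    have p1 : ∑ k ∈ Finset.range M, X ^ k * ι (b k) = f := by
      rw [← pad (n + 1) M b (by omega) (fun k hk => hb_top k (by omega)), ← hf]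
    have p2 := hδ M (by omega)
    have p3 : ∑ k ∈ Finset.range M, X ^ k * ι (if k = 0 then 0 else c (k - 1))
        = (X * ι a) * f := by
      rw [hXg]
      symm
      refine pad (N + 1) M _ (by omega) ?_
      intro k hk
      have : k ≠ 0 := by omega
      simp [this, hcN (k - 1) (by omega)]
    rw [expand, p1, p2, p3]
    exact hqr₂
  have he2top : ∀ k, M ≤ k → e2 k = 0 := by
    intro k hk
    have h1 : b k = 0 := hb_top k (by omega)
    simp [he2, h1, show k ≠ 1 by omega, show k ≠ 0 by omega, hcN (k - 1) (by omega)]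
  have he20 : ∀ k, e2 k = 0 := L M e2 he2top key2
  have hb0 : b 0 = 0 := by
    have := he20 0
    simpa [he2] using this
  ------------------------------------------------------------------
  -- Conclusions
  ------------------------------------------------------------------
  refine ⟨hb0, ?_, ?_, ?_⟩
  · rcases Nat.eq_zero_or_pos n with hn | hn
    · rw [hn, hb0, zero_mul]
    · have h := he0 (n + 1)
      have h1 : b (n + 1) = 0 := hb_top (n + 1) (by omega)
      simp [he, h1, D0, show n + 1 ≠ 1 by omega, show n ≠ 0 by omega] at h
      exact h
  · intro i h2 hn'
    have h := he0 i
    simpa [he, show i ≠ 1 by omega, show i ≠ 0 by omega] using h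
  · have h := he0 1
    simp [he, hb0] at h
    simpa using h
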